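/- Let eip be an elastic inner product on U* with induced distance δ_eip, and let ν > 0. Then the Gaussian elastic kernel K(A,B) = exp(−ν · δ_eip(A,B)²) is a positive definite kernel on U*. -/

import Mathlib

noncomputable section

/-- A discrete time series is represented as a list of (timestamp, value) pairs,
stored in strictly *decreasing* timestamp order (head = last sample).
`IsTS` says timestamps strictly decrease along the list and no spatial value is zero,
i.e. the list represents an element of `U*` (the empty list being `Ω`). -/
def IsTS {S : Type*} [Zero S] (l : List (ℝ × S)) : Prop :=
  l.Chain' (fun x y => y.1 < x.1) ∧ ∀ p ∈ l, p.2 ≠ (0 : S)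

/-- The recursive elastic product with parameters `α β ξ` and functions `f`, `g`:
`ep(A₁ᵖ,B₁ᵠ) = α·ep(A₁ᵖ⁻¹,B₁ᵠ) + β·ep(A₁ᵖ⁻¹,B₁ᵠ⁻¹) + f(a(p),b(q))·g(t_{a(p)},t_{b(q)}) + α·ep(A₁ᵖ,B₁ᵠ⁻¹)`
with base case `ep(A,Ω) = ep(Ω,B) = ξ`. -/
def ep {S : Type*} (f : S → S → ℝ) (g : ℝ → ℝ → ℝ) (α β ξ : ℝ) :
    List (ℝ × S) → List (ℝ × S) → ℝ
  | [], _ => ξ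
  | _ :: _, [] => ξ
  | (t, a) :: A, (u, b) :: B =>
      α * ep f g α β ξ A ((u, b) :: B) + β * ep f g α β ξ A B
        + f a b * g t u + α * ep f g α β ξ ((t, a) :: A) B
  termination_by A B => A.length + B.length


open Classical in
/-- The timestamp-merging addition `⊕`: merge the two series by timestamps, adding the
spatial values at coinciding timestamps and deleting resulting zero values. -/
def tsAdd {S : Type*} [AddCommGroup S] :
    List (ℝ × S) → List (ℝ × S) → List (ℝ × S)
  | [], l => l
  | l, [] => l
  | (t, a) :: A, (u, b) :: B =>
      if u < t then (t, a) :: tsAdd A ((u, b) :: B)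
      else if t < u then (u, b) :: tsAdd ((t, a) :: A) B
      else if a + b = 0 then tsAdd A B
      else (t, a + b) :: tsAdd A B
  termination_by A B => A.length + B.length


open Classical in
/-- Scalar multiplication `⊗`: scale every spatial value, deleting everything if `λ = 0`. -/
def tsSmul {S : Type*} [AddCommGroup S] [Module ℝ S] (r : ℝ) (l : List (ℝ × S)) :
    List (ℝ × S) :=
  if r = 0 then [] else l.map fun p => (p.1, r • p.2)

/-- `ip` is an inner product on `(U*, ⊕, ⊗)`: symmetric, bilinear
(linearity in the first argument together with symmetry), and positive definite. -/
structure IsInnerOnTS {S : Type*} [AddCommGroup S] [Module ℝ S]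
    (ip : List (ℝ × S) → List (ℝ × S) → ℝ) : Prop where
  symm : ∀ A B, IsTS A → IsTS B → ip A B = ip B A
  add_left : ∀ A B C, IsTS A → IsTS B → IsTS C → ip (tsAdd A B) C = ip A C + ip B C
  smul_left : ∀ (r : ℝ) A B, IsTS A → IsTS B → ip (tsSmul r A) B = r * ip A B
  nonneg : ∀ A, IsTS A → 0 ≤ ip A A
  definite : ∀ A, IsTS A → (ip A A = 0 ↔ A = [])

section Aux

variable {S : Type*} [AddCommGroup S] [Module ℝ S]


lemma tsAdd_fst_mem (A B : List (ℝ × S)) :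
    ∀ p ∈ tsAdd A B, p.1 ∈ A.map Prod.fst ∨ p.1 ∈ B.map Prod.fst := by
  induction A, B using tsAdd.induct with
  | case1 l => intro p hp; right; rw [tsAdd] at hp; exact List.mem_map_of_mem hp
  | case2 l h =>
      intro p hp
      cases l with
      | nil => exact absurd rfl h
      | cons q l =>
          rw [tsAdd] at hp
          · left; exact List.mem_map_of_mem hp
          · exact fun hh => List.cons_ne_nil _ _ hh
  | case3 t a A u b B h ih =>
      intro p hp
      rw [tsAdd, if_pos h] at hp
      rcases List.mem_cons.mp hp with rfl | hp
      · left; simp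
      · rcases ih p hp with h1 | h1
        · left; simp only [List.map_cons, List.mem_cons]; right; exact h1
        · right; exact h1
  | case4 t a A u b B h h' ih =>
      intro p hp
      rw [tsAdd, if_neg h, if_pos h'] at hp
      rcases List.mem_cons.mp hp with rfl | hp
      · right; simp
      · rcases ih p hp with h1 | h1
        · left; exact h1
        · right; simp only [List.map_cons, List.mem_cons]; right; exact h1
  | case5 t a A u b B h h' hz ih =>
      intro p hp
      rw [tsAdd, if_neg h, if_neg h', if_pos hz] at hp
      rcases ih p hp with h1 | h1
      · left; simp only [List.map_cons, List.mem_cons]; right; exact h1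
      · right; simp only [List.map_cons, List.mem_cons]; right; exact h1
  | case6 t a A u b B h h' hz ih =>
      intro p hp
      rw [tsAdd, if_neg h, if_neg h', if_neg hz] at hp
      rcases List.mem_cons.mp hp with rfl | hp
      · left; simp
      · rcases ih p hp with h1 | h1
        · left; simp only [List.map_cons, List.mem_cons]; right; exact h1
        · right; simp only [List.map_cons, List.mem_cons]; right; exact h1

lemma tsAdd_snd_ne (A B : List (ℝ × S)) (hA : ∀ p ∈ A, p.2 ≠ 0) (hB : ∀ p ∈ B, p.2 ≠ 0) :
    ∀ p ∈ tsAdd A B, p.2 ≠ 0 := by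
  induction A, B using tsAdd.induct with
  | case1 l => intro p hp; rw [tsAdd] at hp; exact hB p hp
  | case2 l h =>
      intro p hp
      cases l with
      | nil => exact absurd rfl h
      | cons q l =>
          rw [tsAdd] at hp
          · exact hA p hp
          · exact fun hh => List.cons_ne_nil _ _ hh
  | case3 t a A u b B h ih =>
      intro p hp
      rw [tsAdd, if_pos h] at hp
      rcases List.mem_cons.mp hp with rfl | hp
      · exact hA _ (List.mem_cons_self)
      · exact ih (fun q hq => hA q (List.mem_cons_of_mem _ hq)) hB p hp
  | case4 t a A u b B h h' ih =>
      intro p hp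
      rw [tsAdd, if_neg h, if_pos h'] at hp
      rcases List.mem_cons.mp hp with rfl | hp
      · exact hB _ (List.mem_cons_self)
      · exact ih hA (fun q hq => hB q (List.mem_cons_of_mem _ hq)) p hp
  | case5 t a A u b B h h' hz ih =>
      intro p hp
      rw [tsAdd, if_neg h, if_neg h', if_pos hz] at hp
      exact ih (fun q hq => hA q (List.mem_cons_of_mem _ hq))
        (fun q hq => hB q (List.mem_cons_of_mem _ hq)) p hp
  | case6 t a A u b B h h' hz ih =>
      intro p hp
      rw [tsAdd, if_neg h, if_neg h', if_neg hz] at hp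
      rcases List.mem_cons.mp hp with rfl | hp
      · exact hz
      · exact ih (fun q hq => hA q (List.mem_cons_of_mem _ hq))
          (fun q hq => hB q (List.mem_cons_of_mem _ hq)) p hp

lemma tsAdd_pairwise (A B : List (ℝ × S)) (hA : A.Pairwise (fun x y : ℝ × S => y.1 < x.1)) (hB : B.Pairwise (fun x y : ℝ × S => y.1 < x.1)) :
    (tsAdd A B).Pairwise (fun x y : ℝ × S => y.1 < x.1) := by
  induction A, B using tsAdd.induct with
  | case1 l => rw [tsAdd]; exact hB
  | case2 l h =>
      cases l with
      | nil => exact absurd rfl h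
      | cons q l =>
          rw [tsAdd]
          · exact hA
          · exact fun hh => List.cons_ne_nil _ _ hh
  | case3 t a A u b B h ih =>
      rw [tsAdd, if_pos h]
      rw [List.pairwise_cons] at hA ⊢
      refine ⟨?_, ih hA.2 hB⟩
      intro p hp
      rcases tsAdd_fst_mem A ((u, b) :: B) p hp with h1 | h1
      · rcases List.mem_map.mp h1 with ⟨q, hq, hq'⟩
        simpa [← hq'] using hA.1 q hq
      · rw [List.pairwise_cons] at hB
        rcases List.mem_map.mp h1 with ⟨q, hq, hq'⟩
        rcases List.mem_cons.mp hq with rfl | hq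
        · simpa [← hq'] using h
        · have := hB.1 q hq
          simp only [← hq']
          exact lt_trans this h
  | case4 t a A u b B h h' ih =>
      rw [tsAdd, if_neg h, if_pos h']
      rw [List.pairwise_cons] at hB ⊢
      refine ⟨?_, ih hA hB.2⟩
      intro p hp
      rcases tsAdd_fst_mem ((t, a) :: A) B p hp with h1 | h1
      · rw [List.pairwise_cons] at hA
        rcases List.mem_map.mp h1 with ⟨q, hq, hq'⟩
        rcases List.mem_cons.mp hq with rfl | hq
        · simpa [← hq'] using h'
        · have := hA.1 q hq
          simp only [← hq']
          exact lt_trans this h'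
      · rcases List.mem_map.mp h1 with ⟨q, hq, hq'⟩
        simpa [← hq'] using hB.1 q hq
  | case5 t a A u b B h h' hz ih =>
      rw [tsAdd, if_neg h, if_neg h', if_pos hz]
      rw [List.pairwise_cons] at hA hB
      exact ih hA.2 hB.2
  | case6 t a A u b B h h' hz ih =>
      rw [tsAdd, if_neg h, if_neg h', if_neg hz]
      rw [List.pairwise_cons] at hA hB ⊢
      refine ⟨?_, ih hA.2 hB.2⟩
      intro p hp
      rcases tsAdd_fst_mem A B p hp with h1 | h1
      · rcases List.mem_map.mp h1 with ⟨q, hq, hq'⟩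
        simpa [← hq'] using hA.1 q hq
      · rcases List.mem_map.mp h1 with ⟨q, hq, hq'⟩
        have : q.1 < u := hB.1 q hq
        have htu : u ≤ t := le_of_not_gt h'
        simp only [← hq']
        exact lt_of_lt_of_le this htu

instance : IsTrans (ℝ × S) (fun x y : ℝ × S => y.1 < x.1) :=
  ⟨fun _ _ _ h1 h2 => lt_trans h2 h1⟩

lemma IsTS_tsAdd {A B : List (ℝ × S)} (hA : IsTS A) (hB : IsTS B) : IsTS (tsAdd A B) := by
  constructor
  · unfold List.Chain'
    rw [List.isChain_iff_pairwise]
    exact tsAdd_pairwise A B (List.isChain_iff_pairwise.mp hA.1) (List.isChain_iff_pairwise.mp hB.1)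
  · exact tsAdd_snd_ne A B hA.2 hB.2

lemma IsTS_nil : IsTS ([] : List (ℝ × S)) := ⟨List.isChain_nil, by simp⟩

lemma IsTS_tsSmul (r : ℝ) {A : List (ℝ × S)} (hA : IsTS A) : IsTS (tsSmul r A) := by
  rw [tsSmul]
  split_ifs with hr
  · exact IsTS_nil
  · constructor
    · unfold List.Chain'
      rw [List.isChain_map]
      exact hA.1
    · intro p hp
      rcases List.mem_map.mp hp with ⟨q, hq, hq'⟩
      rw [← hq']
      simp only [ne_eq]
      intro hzero
      have hq2 : q.2 = 0 := by
        have := smul_eq_zero.mp hzero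
        tauto
      exact hA.2 q hq hq2

variable (ip : List (ℝ × S) → List (ℝ × S) → ℝ)

/-- finite linear combination -/
def combo (L : List (ℝ × List (ℝ × S))) : List (ℝ × S) :=
  L.foldr (fun p acc => tsAdd (tsSmul p.1 p.2) acc) []

lemma IsTS_combo (L : List (ℝ × List (ℝ × S))) (hL : ∀ p ∈ L, IsTS p.2) :
    IsTS (combo L) := by
  induction L with
  | nil => exact IsTS_nil
  | cons p L ih =>
      exact IsTS_tsAdd (IsTS_tsSmul p.1 (hL p (List.mem_cons_self)))
        (ih fun q hq => hL q (List.mem_cons_of_mem _ hq))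

lemma ip_nil_left (hip : IsInnerOnTS ip) (B : List (ℝ × S)) (hB : IsTS B) : ip [] B = 0 := by
  have := hip.smul_left 0 B B hB hB
  rw [tsSmul] at this
  simpa using this

lemma ip_combo (hip : IsInnerOnTS ip) (L : List (ℝ × List (ℝ × S))) (hL : ∀ p ∈ L, IsTS p.2)
    (B : List (ℝ × S)) (hB : IsTS B) :
    ip (combo L) B = (L.map fun p => p.1 * ip p.2 B).sum := by
  induction L with
  | nil => simpa [combo] using ip_nil_left ip hip B hB
  | cons p L ih =>
      have hp : IsTS p.2 := hL p (List.mem_cons_self)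
      have hL' : ∀ q ∈ L, IsTS q.2 := fun q hq => hL q (List.mem_cons_of_mem _ hq)
      have h1 : ip (combo (p :: L)) B
          = ip (tsSmul p.1 p.2) B + ip (combo L) B :=
        hip.add_left _ _ _ (IsTS_tsSmul p.1 hp) (IsTS_combo L hL') hB
      rw [show combo (p :: L) = tsAdd (tsSmul p.1 p.2) (combo L) from rfl] at *
      rw [h1, hip.smul_left p.1 p.2 B hp hB, ih hL']
      simp

lemma gram_nonneg (hip : IsInnerOnTS ip) (n : ℕ) (A : Fin n → List (ℝ × S))
    (hA : ∀ i, IsTS (A i)) (c : Fin n → ℝ) :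
    0 ≤ ∑ i : Fin n, ∑ j : Fin n, c i * c j * ip (A i) (A j) := by
  set L : List (ℝ × List (ℝ × S)) := (List.finRange n).map fun i => (c i, A i) with hLdef
  have hL : ∀ p ∈ L, IsTS p.2 := by
    intro p hp
    rcases List.mem_map.mp hp with ⟨i, _, rfl⟩
    exact hA i
  have hTS : IsTS (combo L) := IsTS_combo L hL
  have key : ip (combo L) (combo L)
      = ∑ i : Fin n, ∑ j : Fin n, c i * c j * ip (A i) (A j) := by
    rw [ip_combo ip hip L hL _ hTS, hLdef, List.map_map, ← Fin.sum_univ_def]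
    refine Finset.sum_congr rfl fun i _ => ?_
    have h2 : ip (A i) (combo L) = ip (combo L) (A i) := hip.symm _ _ (hA i) hTS
    have h3 : ip (combo L) (A i) = ∑ j : Fin n, c j * ip (A j) (A i) := by
      rw [ip_combo ip hip L hL _ (hA i), hLdef, List.map_map, ← Fin.sum_univ_def]
      rfl
    simp only [Function.comp_apply, ← hLdef, h2, h3, Finset.mul_sum]
    refine Finset.sum_congr rfl fun j _ => ?_
    rw [hip.symm (A j) (A i) (hA j) (hA i)]
    ring
  rw [← key]
  exact hip.nonneg _ hTS

end Aux

section Kernel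

lemma kernel_pow_nonneg {n : ℕ} (M : Fin n → Fin n → ℝ) (hsymm : ∀ i j, M i j = M j i)
    (h : ∀ c : Fin n → ℝ, 0 ≤ ∑ i : Fin n, ∑ j : Fin n, c i * c j * M i j)
    (k : ℕ) (c : Fin n → ℝ) :
    0 ≤ ∑ i : Fin n, ∑ j : Fin n, c i * c j * (M i j) ^ k := by
  have hPSD : (Matrix.of M).PosSemidef := by
    rw [Matrix.posSemidef_iff_dotProduct_mulVec]
    constructor
    · ext i j
      simp [Matrix.conjTranspose_apply, hsymm i j]
    · intro x
      have := h x
      simp only [dotProduct, Matrix.mulVec, Pi.star_apply, star_trivial,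
        Matrix.of_apply, dotProduct] at *
      calc (0:ℝ) ≤ ∑ i, ∑ j, x i * x j * M i j := this
        _ = ∑ i, x i * ∑ j, M i j * x j := by
            refine Finset.sum_congr rfl fun i _ => ?_
            rw [Finset.mul_sum]
            exact Finset.sum_congr rfl fun j _ => by ring
  obtain ⟨B, hB⟩ : ∃ B : Matrix (Fin n) (Fin n) ℝ, Matrix.of M = B.conjTranspose * B := by
    open scoped MatrixOrder in
    exact CStarAlgebra.nonneg_iff_eq_star_mul_self.mp (Matrix.nonneg_iff_posSemidef.mpr hPSD)
  have hM : ∀ i j, M i j = ∑ t, B t i * B t j := by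
    intro i j
    have : Matrix.of M i j = (B.conjTranspose * B) i j := by rw [← hB]
    simpa [Matrix.mul_apply, Matrix.conjTranspose_apply] using this
  set f : (Fin k → Fin n) → Fin n → ℝ := fun p i => c i * ∏ l, B (p l) i with hf
  calc ∑ i : Fin n, ∑ j : Fin n, c i * c j * (M i j) ^ k
      = ∑ i : Fin n, ∑ j : Fin n, ∑ p : Fin k → Fin n, f p i * f p j := by
        refine Finset.sum_congr rfl fun i _ => Finset.sum_congr rfl fun j _ => ?_
        rw [hM i j, Fintype.sum_pow, Finset.mul_sum]
        refine Finset.sum_congr rfl fun p _ => ?_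
        simp only [hf, Finset.prod_mul_distrib]
        ring
    _ = ∑ p : Fin k → Fin n, ∑ i : Fin n, ∑ j : Fin n, f p i * f p j := by
        have e1 : (∑ i : Fin n, ∑ j : Fin n, ∑ p : Fin k → Fin n, f p i * f p j)
            = ∑ i : Fin n, ∑ p : Fin k → Fin n, ∑ j : Fin n, f p i * f p j :=
          Finset.sum_congr rfl fun i _ => Finset.sum_comm
        rw [e1]
        exact Finset.sum_comm
    _ = ∑ p : Fin k → Fin n, (∑ i : Fin n, f p i) ^ 2 := by
        refine Finset.sum_congr rfl fun p _ => ?_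
        rw [sq, Finset.sum_mul_sum]
    _ ≥ 0 := Finset.sum_nonneg fun p _ => sq_nonneg _

lemma kernel_exp_nonneg {n : ℕ} (M : Fin n → Fin n → ℝ) (hsymm : ∀ i j, M i j = M j i)
    (h : ∀ c : Fin n → ℝ, 0 ≤ ∑ i : Fin n, ∑ j : Fin n, c i * c j * M i j)
    (c : Fin n → ℝ) :
    0 ≤ ∑ i : Fin n, ∑ j : Fin n, c i * c j * Real.exp (M i j) := by
  have hexp : ∀ x : ℝ, Real.exp x = ∑' m : ℕ, x ^ m / m.factorial := by
    intro x
    rw [Real.exp_eq_exp_ℝ, NormedSpace.exp_eq_tsum_div]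
  have hsummable : ∀ (a : ℝ) (x : ℝ), Summable fun m : ℕ => a * (x ^ m / m.factorial) :=
    fun a x => (Real.summable_pow_div_factorial x).mul_left a
  calc (0:ℝ) ≤ ∑' m : ℕ, ∑ q ∈ (Finset.univ ×ˢ Finset.univ : Finset (Fin n × Fin n)),
        c q.1 * c q.2 * ((M q.1 q.2) ^ m / m.factorial) := by
        refine tsum_nonneg fun m => ?_
        have : ∑ q ∈ (Finset.univ ×ˢ Finset.univ : Finset (Fin n × Fin n)),
            c q.1 * c q.2 * ((M q.1 q.2) ^ m / m.factorial)
            = (∑ i : Fin n, ∑ j : Fin n, c i * c j * (M i j) ^ m) / m.factorial := by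
          rw [Finset.sum_div, Finset.sum_product]
          refine Finset.sum_congr rfl fun i _ => ?_
          rw [Finset.sum_div]
          refine Finset.sum_congr rfl fun j _ => ?_
          ring
        rw [this]
        exact div_nonneg (kernel_pow_nonneg M hsymm h m c) (Nat.cast_nonneg _)
    _ = ∑ q ∈ (Finset.univ ×ˢ Finset.univ : Finset (Fin n × Fin n)),
        ∑' m : ℕ, c q.1 * c q.2 * ((M q.1 q.2) ^ m / m.factorial) := by
        exact Summable.tsum_finsetSum fun q _ => hsummable _ _
    _ = ∑ i : Fin n, ∑ j : Fin n, c i * c j * Real.exp (M i j) := by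
        rw [Finset.sum_product]
        refine Finset.sum_congr rfl fun i _ => Finset.sum_congr rfl fun j _ => ?_
        rw [hexp, ← tsum_mul_left]

end Kernel
/-- for `ν > 0`, the Gaussian elastic kernel
`K(A,B) = exp(-ν · δ_eip(A,B)²)` is a positive definite kernel on `U*`. -/
theorem eip_gaussian_kernel_positive_definite
    {S : Type*} [AddCommGroup S] [Module ℝ S]
    (ip : List (ℝ × S) → List (ℝ × S) → ℝ) (hip : IsInnerOnTS ip)
    (ν : ℝ) (hν : 0 < ν) :
    ∀ (n : ℕ) (A : Fin n → List (ℝ × S)), (∀ i, IsTS (A i)) →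
      ∀ c : Fin n → ℝ,
        0 ≤ ∑ i : Fin n, ∑ j : Fin n,
              c i * c j *
                Real.exp (-(ν * (ip (A i) (A i) + ip (A j) (A j)
                  - 2 * ip (A i) (A j)))) 
:= by
  intro n A hA c
  set M : Fin n → Fin n → ℝ := fun i j => 2 * ν * ip (A i) (A j) with hMdef
  set d : Fin n → ℝ := fun i => c i * Real.exp (-(ν * ip (A i) (A i))) with hddef
  have key : ∀ i j, c i * c j *
      Real.exp (-(ν * (ip (A i) (A i) + ip (A j) (A j) - 2 * ip (A i) (A j))))
      = d i * d j * Real.exp (M i j) := by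
    intro i j
    have : -(ν * (ip (A i) (A i) + ip (A j) (A j) - 2 * ip (A i) (A j)))
        = -(ν * ip (A i) (A i)) + -(ν * ip (A j) (A j)) + M i j := by
      simp only [hMdef]; ring
    rw [this, Real.exp_add, Real.exp_add, hddef]
    ring
  have hsymm : ∀ i j, M i j = M j i := by
    intro i j
    simp only [hMdef, hip.symm (A i) (A j) (hA i) (hA j)]
  have hpsd : ∀ x : Fin n → ℝ, 0 ≤ ∑ i : Fin n, ∑ j : Fin n, x i * x j * M i j := by
    intro x
    have h1 := gram_nonneg ip hip n A hA x
    have h2 : ∑ i : Fin n, ∑ j : Fin n, x i * x j * M i j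
        = 2 * ν * ∑ i : Fin n, ∑ j : Fin n, x i * x j * ip (A i) (A j) := by
      simp only [hMdef, Finset.mul_sum]
      exact Finset.sum_congr rfl fun i _ => Finset.sum_congr rfl fun j _ => by ring
    rw [h2]
    positivity
  calc (0:ℝ) ≤ ∑ i : Fin n, ∑ j : Fin n, d i * d j * Real.exp (M i j) :=
        kernel_exp_nonneg M hsymm hpsd d
    _ = _ := by
        refine Finset.sum_congr rfl fun i _ => Finset.sum_congr rfl fun j _ => ?_
        rw [key i j]

end
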